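/- Let r be a real number with 0 < r < 7/15. Then there exists a unique real number R > 0 satisfying the compatibility equation R = r*R + ((2/3)*r*R + 1)*(4*r*R + 5) / ((7/3)*r*R + 3), and this unique positive solution is given explicitly by R = 30 / (9 - 31*r + Real.sqrt (81 + r*(61*r - 138))). -/

import Mathlib

private lemma key_iff (r R : ℝ) (hD : (7/3)*r*R + 3 ≠ 0) :
    (R = r*R + ((2/3)*r*R + 1)*(4*r*R + 5) / ((7/3)*r*R + 3)) ↔
      r*(7-15*r)*R^2 + (9-31*r)*R - 15 = 0 := by
  constructor
  · intro h
    have h2 : R - r*R = ((2/3)*r*R + 1)*(4*r*R + 5) / ((7/3)*r*R + 3) := by linarith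
    rw [eq_div_iff hD] at h2
    linear_combination 3*h2
  · intro h
    have h2 : R - r*R = ((2/3)*r*R + 1)*(4*r*R + 5) / ((7/3)*r*R + 3) := by
      rw [eq_div_iff hD]
      linear_combination (1/3)*h
    linarith

/-- Theorem 2.5(i) (scalar content): for `0 < r < 7/15` there is a unique positive `R`
satisfying the compatibility equation, and it is given by the explicit formula. -/
theorem stmt0 (r : ℝ) (hr : 0 < r) (hr' : r < 7/15) :
    (∃! R : ℝ, 0 < R ∧
      R = r*R + ((2/3)*r*R + 1)*(4*r*R + 5) / ((7/3)*r*R + 3)) ∧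
    (∀ R : ℝ, 0 < R →
      R = r*R + ((2/3)*r*R + 1)*(4*r*R + 5) / ((7/3)*r*R + 3) →
      R = 30 / (9 - 31*r + Real.sqrt (81 + r*(61*r - 138)))) := by
  have ha : 0 < r*(7-15*r) := by nlinarith
  have hΔpos : 0 < 81 + r*(61*r - 138) := by nlinarith [sq_nonneg (9 - 31*r)]
  set s := Real.sqrt (81 + r*(61*r - 138)) with hs
  have hs2 : s^2 = 81 + r*(61*r - 138) := Real.sq_sqrt hΔpos.le
  have hsnn : 0 ≤ s := Real.sqrt_nonneg _
  have hden : 0 < 9 - 31*r + s := by nlinarith [sq_nonneg (s - (31*r - 9)), sq_nonneg (s + (31*r - 9))]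
  set R₀ : ℝ := 30 / (9 - 31*r + s) with hR₀
  have hR₀pos : 0 < R₀ := by positivity
  -- R₀ satisfies the quadratic
  have hquad : r*(7-15*r)*R₀^2 + (9-31*r)*R₀ - 15 = 0 := by
    rw [hR₀]
    field_simp [hden.ne', (show (0:ℝ) < 9 - r*31 + s by linarith).ne']
    nlinarith [hs2, sq_nonneg s]
  -- any positive solution of the quadratic equals R₀
  have huniq : ∀ R : ℝ, 0 < R → r*(7-15*r)*R^2 + (9-31*r)*R - 15 = 0 → R = R₀ := by
    intro R hRpos hR
    by_contra hne
    have h1 : (R - R₀) * (r*(7-15*r)*(R + R₀) + (9-31*r)) = 0 := by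
      linear_combination hR - hquad
    have h2 : r*(7-15*r)*(R + R₀) + (9-31*r) = 0 := by
      rcases mul_eq_zero.mp h1 with h | h
      · exact absurd (sub_eq_zero.mp h) hne
      · exact h
    -- then 15 = -a R R₀ < 0, contradiction
    nlinarith [mul_pos hRpos hR₀pos]
  have hDpos : ∀ R : ℝ, 0 < R → (0:ℝ) < (7/3)*r*R + 3 := by
    intro R hRpos; positivity
  constructor
  · refine ⟨R₀, ⟨hR₀pos, ?_⟩, ?_⟩
    · exact (key_iff r R₀ (hDpos R₀ hR₀pos).ne').mpr hquad
    · rintro R ⟨hRpos, hReq⟩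
      exact huniq R hRpos ((key_iff r R (hDpos R hRpos).ne').mp hReq)
  · intro R hRpos hReq
    exact huniq R hRpos ((key_iff r R (hDpos R hRpos).ne').mp hReq)
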